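/- For any graph G on n vertices and any edge e not in E(G), the symmetric difference of the set of maximal cliques of G and the set of maximal cliques of G+e has size at most 3·f(n-2), where f(k) is the maximum number of maximal cliques in a graph on k vertices. -/

import Mathlib

open SimpleGraph

/-- `s` is a maximal clique of the simple graph `G`. -/
def MaxClique {V : Type*} (G : SimpleGraph V) (s : Set V) : Prop :=
  G.IsClique s ∧ ∀ t : Set V, G.IsClique t → s ⊆ t → s = t

/-- The graph obtained from `G` by adding the edge `(u,v)`. -/
def addEdge {V : Type*} (G : SimpleGraph V) (u v : V) : SimpleGraph V :=
  G ⊔ SimpleGraph.fromEdgeSet {s(u, v)}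

/-- The graph obtained from `G` by adding the set of edges `H`. -/
def addEdges {V : Type*} (G : SimpleGraph V) (H : Set (Sym2 V)) : SimpleGraph V :=
  G ⊔ SimpleGraph.fromEdgeSet H

/-- The number of maximal cliques of `G`. -/
noncomputable def numMaxCliques {V : Type*} (G : SimpleGraph V) : ℕ :=
  Nat.card {s : Set V // MaxClique G s}

/-- `f k`: the maximum possible number of maximal cliques in a graph on `k` vertices. -/
noncomputable def maxNumMaxCliques (k : ℕ) : ℕ :=
  sSup {m | ∃ G : SimpleGraph (Fin k), m = numMaxCliques G}

lemma isClique_comap_iff {X W : Type*} (f : X ≃ W) (H : SimpleGraph W) (s : Set X) :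
    (H.comap f).IsClique s ↔ H.IsClique (f '' s) := by
  constructor
  · rintro hc _ ⟨a, ha, rfl⟩ _ ⟨b, hb, rfl⟩ hab
    exact hc ha hb (fun h => hab (by rw [h]))
  · intro hc a ha b hb hab
    exact hc ⟨a, ha, rfl⟩ ⟨b, hb, rfl⟩ (fun h => hab (f.injective h))

lemma maxClique_comap_iff {X W : Type*} (f : X ≃ W) (H : SimpleGraph W) (s : Set X) :
    MaxClique (H.comap f) s ↔ MaxClique H (f '' s) := by
  constructor
  · rintro ⟨hc, hm⟩
    refine ⟨(isClique_comap_iff f H s).1 hc, ?_⟩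
    intro t ht hsub
    have h1 : (H.comap f).IsClique (f ⁻¹' t) := by
      rw [isClique_comap_iff, Equiv.image_preimage]; exact ht
    have h2 : s ⊆ f ⁻¹' t := fun a ha => hsub ⟨a, ha, rfl⟩
    have := hm _ h1 h2
    rw [this, Equiv.image_preimage]
  · rintro ⟨hc, hm⟩
    refine ⟨(isClique_comap_iff f H s).2 hc, ?_⟩
    intro t ht hsub
    have := hm (f '' t) ((isClique_comap_iff f H t).1 ht) (Set.image_mono hsub)
    exact Set.image_injective.2 f.injective this

lemma numMaxCliques_comap {X W : Type*} (f : X ≃ W) (H : SimpleGraph W) :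
    numMaxCliques (H.comap f) = numMaxCliques H := by
  apply Nat.card_congr
  refine ⟨fun s => ⟨f '' s.1, (maxClique_comap_iff f H s.1).1 s.2⟩,
    fun t => ⟨f ⁻¹' t.1, ?_⟩, fun s => ?_, fun t => ?_⟩
  · rw [maxClique_comap_iff, Equiv.image_preimage]; exact t.2
  · ext a; simp
  · ext a; simp

lemma numMaxCliques_le_max' {W : Type*} [Fintype W] (H : SimpleGraph W) :
    numMaxCliques H ≤ maxNumMaxCliques (Fintype.card W) := by
  set k := Fintype.card W with hk
  let f : Fin k ≃ W := (Fintype.equivFinOfCardEq hk.symm).symm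
  have h1 : numMaxCliques (H.comap f) = numMaxCliques H := numMaxCliques_comap f H
  have hmem : numMaxCliques (H.comap f) ∈ {m | ∃ G : SimpleGraph (Fin k), m = numMaxCliques G} :=
    ⟨H.comap f, rfl⟩
  have hbdd : BddAbove {m | ∃ G : SimpleGraph (Fin k), m = numMaxCliques G} := by
    refine ⟨Nat.card (Set (Fin k)), ?_⟩
    rintro m ⟨G, rfl⟩
    exact Nat.card_le_card_of_injective Subtype.val Subtype.val_injective
  calc numMaxCliques H = numMaxCliques (H.comap f) := h1.symm
    _ ≤ maxNumMaxCliques k := le_csSup hbdd hmem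

section Basics
variable {V : Type*} {G : SimpleGraph V} {u v : V}

lemma addEdge_adj' (huv : u ≠ v) (a b : V) :
    (addEdge G u v).Adj a b ↔ G.Adj a b ∨ (a = u ∧ b = v) ∨ (a = v ∧ b = u) := by
  simp only [addEdge, SimpleGraph.sup_adj, SimpleGraph.fromEdgeSet_adj,
    Set.mem_singleton_iff, Sym2.eq_iff]
  constructor
  · rintro (h | ⟨h1 | h1, h2⟩) <;> tauto
  · rintro (h | ⟨rfl, rfl⟩ | ⟨rfl, rfl⟩)
    · exact Or.inl h
    · exact Or.inr ⟨Or.inl ⟨rfl, rfl⟩, huv⟩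
    · exact Or.inr ⟨Or.inr ⟨rfl, rfl⟩, huv.symm⟩

lemma adj_of_addEdge' (huv : u ≠ v) {a b : V} (h : (addEdge G u v).Adj a b)
    (h1 : ¬(a = u ∧ b = v)) (h2 : ¬(a = v ∧ b = u)) : G.Adj a b := by
  rw [addEdge_adj' huv] at h; tauto

lemma addEdge_comm' (G : SimpleGraph V) (u v : V) : addEdge G u v = addEdge G v u := by
  unfold addEdge
  rw [show s(u, v) = s(v, u) from Sym2.eq_swap]

end Basics

abbrev Wt (V : Type*) (u v : V) := {w : V // w ≠ u ∧ w ≠ v}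

noncomputable instance {V : Type*} [Fintype V] (u v : V) : Fintype (Wt V u v) :=
  Fintype.ofFinite _

def Hgraph {V : Type*} (G : SimpleGraph V) (u v : V) : SimpleGraph (Wt V u v) where
  Adj a b := G.Adj ↑a ↑b ∧ (G.Adj u ↑a ∧ G.Adj v ↑a) ∧ (G.Adj u ↑b ∧ G.Adj v ↑b)
  symm := ⟨fun a b ⟨h1, h2, h3⟩ => ⟨h1.symm, h3, h2⟩⟩
  loopless := ⟨fun a h => G.loopless.irrefl _ h.1⟩

def projW {V : Type*} (u v : V) (s : Set V) : Set (Wt V u v) := {w | ↑w ∈ s}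

lemma card_Wt' {V : Type*} [Fintype V] {u v : V} (huv : u ≠ v) :
    Fintype.card (Wt V u v) = Fintype.card V - 2 := by
  classical
  have e : Wt V u v ≃ ↥(({u, v} : Set V)ᶜ) :=
    Equiv.subtypeEquivRight (by intro w; simp [not_or])
  rw [Fintype.card_congr e, Fintype.card_compl_set]
  congr 1
  rw [← Nat.card_eq_fintype_card, Nat.card_coe_set_eq, Set.ncard_pair huv]

section HMax
variable {V : Type*} {G : SimpleGraph V} {u v : V}

lemma maxClique_H_of (T : Set (Wt V u v)) (hT : T.Nonempty)
    (hcl : (Hgraph G u v).IsClique T)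
    (hmax : ∀ x : Wt V u v, G.Adj u ↑x → G.Adj v ↑x →
      (∀ w ∈ T, x ≠ w → G.Adj ↑x ↑w) → x ∈ T) :
    MaxClique (Hgraph G u v) T := by
  refine ⟨hcl, fun t ht hsub => ?_⟩
  refine Set.Subset.antisymm hsub (fun x hx => ?_)
  by_cases hxT : x ∈ T
  · exact hxT
  obtain ⟨w0, hw0⟩ := hT
  have hxw0 : x ≠ w0 := fun h => hxT (h ▸ hw0)
  have hadj := ht hx (hsub hw0) hxw0
  exact hmax x hadj.2.1.1 hadj.2.1.2 (fun w hw hxw => (ht hx (hsub hw) hxw).1)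

lemma maxClique_H_singleton (hN : ∀ w : V, w ≠ u → w ≠ v → ¬(G.Adj u w ∧ G.Adj v w))
    (w0 : Wt V u v) : MaxClique (Hgraph G u v) {w0} := by
  refine ⟨by simp, fun t ht hsub => ?_⟩
  refine Set.Subset.antisymm hsub (fun x hx => ?_)
  by_cases h : x = w0
  · simp [h]
  · have hadj := ht hx (hsub (Set.mem_singleton w0)) h
    exact absurd ⟨hadj.2.1.1, hadj.2.1.2⟩ (hN ↑x x.2.1 x.2.2)

end HMax

section ClassBound
variable {V : Type*} [Fintype V] {G : SimpleGraph V} {u v : V}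

lemma class_bound' (hn : 2 < Fintype.card V) (huv : u ≠ v)
    (A : Set (Set V))
    (h1 : ∀ s ∈ A, ∀ w : Wt V u v, ↑w ∈ s → G.Adj u ↑w ∧ G.Adj v ↑w)
    (h2 : ∀ s ∈ A, (Hgraph G u v).IsClique (projW u v s))
    (h3 : ∀ s ∈ A, ∀ x : Wt V u v, G.Adj u ↑x → G.Adj v ↑x →
        (∀ w ∈ projW u v s, x ≠ w → G.Adj ↑x ↑w) → x ∈ projW u v s)
    (h4 : ∀ s ∈ A, ∀ s' ∈ A, projW u v s = projW u v s' → s = s') :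
    A.ncard ≤ maxNumMaxCliques (Fintype.card V - 2) := by
  classical
  have hpos : 0 < Fintype.card (Wt V u v) := by rw [card_Wt' huv]; omega
  obtain ⟨w0⟩ := Fintype.card_pos_iff.mp hpos
  have hNempty : ∀ s ∈ A, projW u v s = ∅ →
      ∀ w : V, w ≠ u → w ≠ v → ¬(G.Adj u w ∧ G.Adj v w) := by
    intro s hs hp w hwu hwv ⟨hu, hv⟩
    have := h3 s hs ⟨w, hwu, hwv⟩ hu hv (by rw [hp]; intro w' hw'; exact absurd hw' (Set.notMem_empty _))
    rw [hp] at this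
    exact Set.notMem_empty _ this
  have step1 : A.ncard ≤ {T : Set (Wt V u v) | MaxClique (Hgraph G u v) T}.ncard := by
    apply Set.ncard_le_ncard_of_injOn
      (fun s => if projW u v s = ∅ then {w0} else projW u v s)
    · intro s hs
      by_cases hp : projW u v s = ∅
      · simp only [Set.mem_setOf_eq, if_pos hp]
        exact maxClique_H_singleton (hNempty s hs hp) w0
      · simp only [Set.mem_setOf_eq, if_neg hp]
        exact maxClique_H_of _ (Set.nonempty_iff_ne_empty.2 hp) (h2 s hs) (h3 s hs)
    · intro s hs s' hs' heq
      dsimp only at heq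
      by_cases hp : projW u v s = ∅ <;> by_cases hp' : projW u v s' = ∅
      · exact h4 s hs s' hs' (hp.trans hp'.symm)
      · exfalso
        rw [if_pos hp, if_neg hp'] at heq
        have hw0 : w0 ∈ projW u v s' := by rw [← heq]; exact Set.mem_singleton w0
        obtain ⟨hu, hv⟩ := h1 s' hs' w0 hw0
        exact hNempty s hs hp ↑w0 w0.2.1 w0.2.2 ⟨hu, hv⟩
      · exfalso
        rw [if_neg hp, if_pos hp'] at heq
        have hw0 : w0 ∈ projW u v s := by rw [heq]; exact Set.mem_singleton w0
        obtain ⟨hu, hv⟩ := h1 s hs w0 hw0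
        exact hNempty s' hs' hp' ↑w0 w0.2.1 w0.2.2 ⟨hu, hv⟩
      · rw [if_neg hp, if_neg hp'] at heq
        exact h4 s hs s' hs' heq

  have step2 : {T : Set (Wt V u v) | MaxClique (Hgraph G u v) T}.ncard
      = numMaxCliques (Hgraph G u v) := by
    rw [numMaxCliques, ← Nat.card_coe_set_eq]; rfl
  calc A.ncard ≤ _ := step1
    _ = numMaxCliques (Hgraph G u v) := step2
    _ ≤ maxNumMaxCliques (Fintype.card (Wt V u v)) := numMaxCliques_le_max' _
    _ = maxNumMaxCliques (Fintype.card V - 2) := by rw [card_Wt' huv]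

end ClassBound

section Classes
variable {V : Type*} [Fintype V] {G : SimpleGraph V} {u v : V}

lemma SA_bound (hn : 2 < Fintype.card V) (huv : u ≠ v) :
    {s : Set V | MaxClique (addEdge G u v) s ∧ u ∈ s ∧ v ∈ s}.ncard ≤
      maxNumMaxCliques (Fintype.card V - 2) := by
  set A := {s : Set V | MaxClique (addEdge G u v) s ∧ u ∈ s ∧ v ∈ s} with hA
  have h1 : ∀ s ∈ A, ∀ w : Wt V u v, ↑w ∈ s → G.Adj u ↑w ∧ G.Adj v ↑w := by
    rintro s ⟨hs, hu, hv⟩ w hw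
    refine ⟨adj_of_addEdge' huv (hs.1 hu hw (Ne.symm w.2.1))
        (fun h => w.2.2 h.2) (fun h => huv h.1), ?_⟩
    exact adj_of_addEdge' huv (hs.1 hv hw (Ne.symm w.2.2))
        (fun h => huv h.1.symm) (fun h => w.2.1 h.2)
  refine class_bound' hn huv A h1 ?_ ?_ ?_
  · rintro s hs a ha b hb hab
    have hsm := hs.1
    have hval : (↑a : V) ≠ ↑b := fun h => hab (Subtype.ext h)
    refine ⟨adj_of_addEdge' huv (hsm.1 ha hb hval)
        (fun h => a.2.1 h.1) (fun h => a.2.2 h.1), h1 s hs a ha, h1 s hs b hb⟩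
  · rintro s hs x hxu hxv hadj
    obtain ⟨hsm, hu, hv⟩ := hs
    have hclq : (addEdge G u v).IsClique (insert (↑x : V) s) := by
      rw [SimpleGraph.isClique_insert]
      refine ⟨hsm.1, fun b hb hxb => ?_⟩
      by_cases hbu : b = u
      · subst hbu; rw [addEdge_adj' huv]; exact Or.inl hxu.symm
      by_cases hbv : b = v
      · subst hbv; rw [addEdge_adj' huv]; exact Or.inl hxv.symm
      have hbW : (⟨b, hbu, hbv⟩ : Wt V u v) ∈ projW u v s := hb
      have hxne : x ≠ (⟨b, hbu, hbv⟩ : Wt V u v) := fun h => hxb (congrArg Subtype.val h)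
      rw [addEdge_adj' huv]
      exact Or.inl (hadj _ hbW hxne)
    have := hsm.2 _ hclq (Set.subset_insert _ _)
    have hxs : (↑x : V) ∈ s := this ▸ Set.mem_insert _ _
    exact hxs
  · rintro s hs s' hs' hproj
    obtain ⟨hsm, hu, hv⟩ := hs
    obtain ⟨hsm', hu', hv'⟩ := hs'
    ext w
    by_cases hwu : w = u
    · subst hwu; simp [hu, hu']
    by_cases hwv : w = v
    · subst hwv; simp [hv, hv']
    exact Set.ext_iff.1 hproj ⟨w, hwu, hwv⟩

lemma SB_bound (hn : 2 < Fintype.card V) (huv : u ≠ v) (hne : ¬ G.Adj u v) :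
    {s : Set V | MaxClique G s ∧ u ∈ s ∧ (addEdge G u v).IsClique (insert v s)}.ncard ≤
      maxNumMaxCliques (Fintype.card V - 2) := by
  set A := {s : Set V | MaxClique G s ∧ u ∈ s ∧ (addEdge G u v).IsClique (insert v s)} with hA
  have hvs : ∀ s ∈ A, v ∉ s := by
    rintro s ⟨hsm, hu, hins⟩ hv
    exact hne (hsm.1 hu hv huv)
  have h1 : ∀ s ∈ A, ∀ w : Wt V u v, ↑w ∈ s → G.Adj u ↑w ∧ G.Adj v ↑w := by
    rintro s hsA w hw
    obtain ⟨hsm, hu, hins⟩ := hsA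
    refine ⟨hsm.1 hu hw (Ne.symm w.2.1), ?_⟩
    have := hins (Set.mem_insert v s) (Set.mem_insert_of_mem _ hw) (Ne.symm w.2.2)
    exact adj_of_addEdge' huv this (fun h => huv h.1.symm) (fun h => w.2.1 h.2)
  refine class_bound' hn huv A h1 ?_ ?_ ?_
  · rintro s hsA a ha b hb hab
    have hval : (↑a : V) ≠ ↑b := fun h => hab (Subtype.ext h)
    exact ⟨hsA.1.1 ha hb hval, h1 s hsA a ha, h1 s hsA b hb⟩
  · rintro s hsA x hxu hxv hadj
    obtain ⟨hsm, hu, hins⟩ := hsA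
    have hclq : G.IsClique (insert (↑x : V) s) := by
      rw [SimpleGraph.isClique_insert]
      refine ⟨hsm.1, fun b hb hxb => ?_⟩
      by_cases hbu : b = u
      · subst hbu; exact hxu.symm
      have hbv : b ≠ v := fun h => hvs s ⟨hsm, hu, hins⟩ (h ▸ hb)
      have hbW : (⟨b, hbu, hbv⟩ : Wt V u v) ∈ projW u v s := hb
      have hxne : x ≠ (⟨b, hbu, hbv⟩ : Wt V u v) := fun h => hxb (congrArg Subtype.val h)
      exact hadj _ hbW hxne
    have := hsm.2 _ hclq (Set.subset_insert _ _)
    have hxs : (↑x : V) ∈ s := this ▸ Set.mem_insert _ _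
    exact hxs
  · rintro s hs s' hs' hproj
    have hv := hvs s hs
    have hv' := hvs s' hs'
    obtain ⟨hsm, hu, hins⟩ := hs
    obtain ⟨hsm', hu', hins'⟩ := hs'
    ext w
    by_cases hwu : w = u
    · subst hwu; simp [hu, hu']
    by_cases hwv : w = v
    · subst hwv; simp [hv, hv']
    exact Set.ext_iff.1 hproj ⟨w, hwu, hwv⟩

end Classes

theorem stmt_4 {V : Type*} [Fintype V] (hn : 2 < Fintype.card V)
    (G : SimpleGraph V) (u v : V) (huv : u ≠ v) (hne : ¬ G.Adj u v) :
    Nat.card ↥(symmDiff {s : Set V | MaxClique G s} {s : Set V | MaxClique (addEdge G u v) s}) ≤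
      3 * maxNumMaxCliques (Fintype.card V - 2) := by
  classical
  set G' := addEdge G u v with hG'
  have hle : G ≤ G' := le_sup_left
  set SA := {s : Set V | MaxClique G' s ∧ u ∈ s ∧ v ∈ s} with hSA
  set SB := {s : Set V | MaxClique G s ∧ u ∈ s ∧ G'.IsClique (insert v s)} with hSB
  set SC := {s : Set V | MaxClique G s ∧ v ∈ s ∧ G'.IsClique (insert u s)} with hSC
  have hcover : symmDiff {s : Set V | MaxClique G s} {s : Set V | MaxClique G' s}
      ⊆ SA ∪ (SB ∪ SC) := by
    rw [Set.symmDiff_def]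
    rintro s (⟨hsX, hsY⟩ | ⟨hsY, hsX⟩)
    · -- s max in G, not max in G'
      right
      have hclq' : G'.IsClique s := hsX.1.mono hle
      have hnall : ¬ ∀ t : Set V, G'.IsClique t → s ⊆ t → s = t := fun h => hsY ⟨hclq', h⟩
      push_neg at hnall
      obtain ⟨t, ht, hsub, hne'⟩ := hnall
      obtain ⟨x, hxt, hxs⟩ := Set.exists_of_ssubset (hsub.ssubset_of_ne hne')
      have hins : G'.IsClique (insert x s) :=
        ht.subset (Set.insert_subset_iff.2 ⟨hxt, hsub⟩)
      have hnotG : ¬ G.IsClique (insert x s) := by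
        intro h
        have := hsX.2 _ h (Set.subset_insert _ _)
        exact hxs (this ▸ Set.mem_insert _ _)
      have hnotboth : ¬ (u ∈ s ∧ v ∈ s) := fun ⟨hu, hv⟩ => hne (hsX.1 hu hv huv)
      -- find the bad pair
      have huvmem : u ∈ insert x s ∧ v ∈ insert x s := by
        rw [SimpleGraph.IsClique, Set.Pairwise] at hnotG
        push_neg at hnotG
        obtain ⟨a, ha, b, hb, hab, hnadj⟩ := hnotG
        have := hins ha hb hab
        rw [addEdge_adj' huv] at this
        rcases this with h | ⟨rfl, rfl⟩ | ⟨rfl, rfl⟩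
        · exact absurd h hnadj
        · exact ⟨ha, hb⟩
        · exact ⟨hb, ha⟩
      obtain ⟨humem, hvmem⟩ := huvmem
      by_cases hu : u ∈ s
      · left
        have hv : v ∉ s := fun hv => hnotboth ⟨hu, hv⟩
        have hvx : v = x := by
          rcases hvmem with h | h
          · exact h
          · exact absurd h hv
        exact ⟨hsX, hu, hvx ▸ hins⟩
      · right
        have hux : u = x := by
          rcases humem with h | h
          · exact h
          · exact absurd h hu
        have hv : v ∈ s := by
          rcases hvmem with h | h
          · exact absurd (h.trans hux.symm ▸ rfl : v = u) huv.symm  -- v = x = u contra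
          · exact h
        exact ⟨hsX, hv, hux ▸ hins⟩
    · -- s max in G', not max clique of G
      left
      by_contra hnot
      rw [hSA, Set.mem_setOf_eq] at hnot
      push_neg at hnot
      have huvs : ¬ (u ∈ s ∧ v ∈ s) := fun ⟨hu, hv⟩ => absurd hv (hnot hsY hu)
      have hclq : G.IsClique s := by
        intro a ha b hb hab
        have := hsY.1 ha hb hab
        rw [addEdge_adj' huv] at this
        rcases this with h | ⟨rfl, rfl⟩ | ⟨rfl, rfl⟩
        · exact h
        · exact absurd ⟨ha, hb⟩ huvs
        · exact absurd ⟨hb, ha⟩ huvs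
      exact hsX ⟨hclq, fun t ht hsub => hsY.2 t (ht.mono hle) hsub⟩
  calc Nat.card ↥(symmDiff {s : Set V | MaxClique G s} {s : Set V | MaxClique G' s})
      = (symmDiff {s : Set V | MaxClique G s} {s : Set V | MaxClique G' s}).ncard :=
        Nat.card_coe_set_eq _
    _ ≤ (SA ∪ (SB ∪ SC)).ncard := Set.ncard_le_ncard hcover (Set.toFinite _)
    _ ≤ SA.ncard + (SB ∪ SC).ncard := Set.ncard_union_le _ _
    _ ≤ SA.ncard + (SB.ncard + SC.ncard) := by
        exact Nat.add_le_add_left (Set.ncard_union_le _ _) _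
    _ ≤ maxNumMaxCliques (Fintype.card V - 2) + (maxNumMaxCliques (Fintype.card V - 2)
          + maxNumMaxCliques (Fintype.card V - 2)) := by
        have hA := SA_bound (G := G) (u := u) (v := v) hn huv
        have hB := SB_bound (G := G) (u := u) (v := v) hn huv hne
        have hC : SC.ncard ≤ maxNumMaxCliques (Fintype.card V - 2) := by
          have := SB_bound (G := G) (u := v) (v := u) hn huv.symm (fun h => hne h.symm)
          rw [← addEdge_comm' G u v] at this
          exact this
        exact add_le_add hA (add_le_add hB hC)
    _ = 3 * maxNumMaxCliques (Fintype.card V - 2) := by ring
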